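/- Let R₀ be a commutative domain and let M be a p × q matrix over R₀ with p ≤ q. Suppose I is an ideal of R₀ contained in the radical of the ideal generated by the p × p minors of M, and suppose M has maximal rank p. Then every associated prime of the R₀-module coker(M) contains I. In particular, for every x ∈ I the localization of coker(M) at x is zero. -/

import Mathlib

open Matrix

/-- Abstract form of Theorem 1 of Katzman's paper: if an ideal `I` of a domain `R₀`
is contained in the radical of the ideal of maximal minors of a `p × q` matrix `M`
(`p ≤ q`) of maximal rank, then every associated prime of `coker M` contains `I`;
in particular the localization of `coker M` at any `x ∈ I` vanishes. -/
theorem stmt_3 (R₀ : Type*) [CommRing R₀] [IsDomain R₀]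
    (p q : ℕ) (hpq : p ≤ q) (M : Matrix (Fin p) (Fin q) R₀)
    (hrank : ∃ g : Fin p → Fin q, Function.Injective g ∧
      (M.submatrix id g).det ≠ 0)
    (I : Ideal R₀)
    (hI : I ≤ (Ideal.span {d : R₀ | ∃ g : Fin p → Fin q, Function.Injective g ∧
      d = (M.submatrix id g).det}).radical) :
    (∀ P ∈ associatedPrimes R₀ ((Fin p → R₀) ⧸ LinearMap.range M.mulVecLin), I ≤ P)
    ∧ ∀ x ∈ I, ∀ m : (Fin p → R₀) ⧸ LinearMap.range M.mulVecLin,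
        ∃ n : ℕ, x ^ n • m = 0 := by
  set S : Set R₀ := {d : R₀ | ∃ g : Fin p → Fin q, Function.Injective g ∧
      d = (M.submatrix id g).det} with hS
  -- every element of the span of maximal minors annihilates the cokernel
  have key : ∀ d ∈ Ideal.span S,
      ∀ m : (Fin p → R₀) ⧸ LinearMap.range M.mulVecLin, d • m = 0 := by
    have hle : Ideal.span S ≤
        Module.annihilator R₀ ((Fin p → R₀) ⧸ LinearMap.range M.mulVecLin) := by
      rw [Ideal.span_le]
      rintro d ⟨g, hg, rfl⟩
      rw [SetLike.mem_coe, Module.mem_annihilator]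
      intro m
      obtain ⟨v, rfl⟩ := Submodule.Quotient.mk_surjective _ m
      rw [← Submodule.Quotient.mk_smul, Submodule.Quotient.mk_eq_zero]
      set N := M.submatrix id g with hN
      refine ⟨fun j => ∑ i, if g i = j then (N.adjugate *ᵥ v) i else 0, ?_⟩
      have h1 : M *ᵥ (fun j => ∑ i, if g i = j then (N.adjugate *ᵥ v) i else 0)
          = N *ᵥ (N.adjugate *ᵥ v) := by
        ext k
        simp only [Matrix.mulVec, dotProduct, Finset.mul_sum, mul_ite, mul_zero]
        rw [Finset.sum_comm]
        refine Finset.sum_congr rfl fun i _ => ?_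
        rw [Finset.sum_ite_eq]
        simp [hN]
      rw [Matrix.mulVecLin_apply, h1, Matrix.mulVec_mulVec, Matrix.mul_adjugate,
        Matrix.smul_mulVec, Matrix.one_mulVec]
    intro d hd m
    exact Module.mem_annihilator.mp (hle hd) m
  have pow_kills : ∀ x ∈ I, ∃ n : ℕ,
      ∀ m : (Fin p → R₀) ⧸ LinearMap.range M.mulVecLin, x ^ n • m = 0 := by
    intro x hx
    obtain ⟨n, hn⟩ := hI hx
    exact ⟨n, key _ hn⟩
  constructor
  · rintro P ⟨hP, m, rfl⟩ x hx
    obtain ⟨n, hn⟩ := pow_kills x hx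
    have hxn : x ^ n ∈ (Submodule.span R₀ {m}).annihilator := by
      rw [Submodule.mem_annihilator]
      intro y hy
      obtain ⟨c, rfl⟩ := Submodule.mem_span_singleton.mp hy
      rw [smul_comm, hn, smul_zero]
    exact Ideal.mem_radical_iff.mpr ⟨n, by rw [Submodule.mem_colon_singleton, Submodule.mem_bot]; exact hn m⟩
  · intro x hx m
    obtain ⟨n, hn⟩ := pow_kills x hx
    exact ⟨n, hn m⟩
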